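/- The group with presentation ⟨a, b ∣ a²b⁻³ = 1⟩ (the trefoil knot group) is not isomorphic to the infinite cyclic group ℤ. -/
import Mathlib


/-- The single relator `a²b⁻³` of the presentation `⟨a, b ∣ a²b⁻³ = 1⟩`. -/
def trefoilRels : Set (FreeGroup (Fin 2)) :=
  {(FreeGroup.of 0) ^ 2 * (FreeGroup.of 1) ^ (-3 : ℤ)}

/-- The trefoil knot group `⟨a, b ∣ a²b⁻³ = 1⟩` is not isomorphic to the infinite
cyclic group `ℤ`. -/
theorem trefoil_group_not_iso_int :
    ¬ Nonempty (PresentedGroup trefoilRels ≃* Multiplicative ℤ) := by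
  rintro ⟨e⟩
  let f : Fin 2 → Equiv.Perm (Fin 3) := ![Equiv.swap 0 1, finRotate 3]
  have hf : ∀ r ∈ trefoilRels, FreeGroup.lift f r = 1 := by
    intro r hr
    simp only [trefoilRels, Set.mem_singleton_iff] at hr
    subst hr
    simp only [map_mul, map_pow, map_zpow, FreeGroup.lift_apply_of, f]
    decide
  let φ : PresentedGroup trefoilRels →* Equiv.Perm (Fin 3) := PresentedGroup.toGroup hf
  have comm : ∀ x y : PresentedGroup trefoilRels, x * y = y * x := by
    intro x y
    apply e.injective
    simp only [map_mul]
    exact mul_comm _ _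
  have h := congrArg φ (comm (PresentedGroup.of 0) (PresentedGroup.of 1))
  simp only [map_mul, φ, PresentedGroup.toGroup.of, f] at h
  exact absurd h (by decide)
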